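/- Let f : ℝ → ℝ be bounded and regulated, and satisfy the no-jamming condition. Then every Carathéodory solution x : [0,∞) → ℝ of ẋ = f(x) is monotone: either x is nondecreasing on [0,∞) or x is nonincreasing on [0,∞). -/

import Mathlib

open MeasureTheory Set Filter

/-- `f` is regulated with left limits `fl` and right limits `fr`. -/
def Regulated (f fl fr : ℝ → ℝ) : Prop :=
  ∀ y : ℝ,
    Filter.Tendsto f (nhdsWithin y (Set.Iio y)) (nhds (fl y)) ∧
    Filter.Tendsto f (nhdsWithin y (Set.Ioi y)) (nhds (fr y))

/-- The no-jamming condition: if `f(y−)·f(y+) = 0` or `f(y−) > 0 > f(y+)`, then `f(y) = 0`. -/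
def NoJamming (f fl fr : ℝ → ℝ) : Prop :=
  ∀ y : ℝ, (fl y * fr y = 0 ∨ (0 < fl y ∧ fr y < 0)) → f y = 0


/-- last time `x` is `≤ c` before `τ`. -/
lemma last_cross {x : ℝ → ℝ} {a τ c : ℝ} (haτ : a ≤ τ) (hc : ContinuousOn x (Icc a τ))
    (ha : x a ≤ c) (hτ : c < x τ) :
    ∃ u, u ∈ Ico a τ ∧ x u = c ∧ ∀ s, u < s → s ≤ τ → c < x s := by
  set S : Set ℝ := {t | t ∈ Icc a τ ∧ x t ≤ c} with hS
  have hSne : S.Nonempty := ⟨a, ⟨le_refl a, haτ⟩, ha⟩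
  have hSbdd : BddAbove S := ⟨τ, fun t ht => ht.1.2⟩
  set u := sSup S with hu
  have hSclosed : IsClosed S := by
    have : S = Icc a τ ∩ x ⁻¹' (Iic c) := by ext t; simp [hS, and_comm]
    rw [this]
    exact (hc.preimage_isClosed_of_isClosed isClosed_Icc isClosed_Iic)
  have huS : u ∈ S := hSclosed.csSup_mem hSne hSbdd
  have huτ : u ≤ τ := huS.1.2
  have hua : a ≤ u := huS.1.1
  have hafter : ∀ s, u < s → s ≤ τ → c < x s := by
    intro s hus hsτ
    by_contra h
    push_neg at h
    have : s ∈ S := ⟨⟨hua.trans hus.le, hsτ⟩, h⟩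
    exact absurd (le_csSup hSbdd this) (not_le.mpr hus)
  have huτ' : u < τ := lt_of_le_of_ne huτ (fun h => by rw [h] at huS; exact absurd huS.2 (not_le.mpr hτ))
  refine ⟨u, ⟨hua, huτ'⟩, ?_, hafter⟩
  rcases lt_or_eq_of_le huS.2 with hlt | heq
  · exfalso
    have hcw : ContinuousWithinAt x (Icc a τ) u := hc u huS.1
    have hev : ∀ᶠ s in nhdsWithin u (Icc a τ), x s < c := hcw.eventually_lt_const hlt
    have hle : nhdsWithin u (Ioi u) ≤ nhdsWithin u (Icc a τ) := by
      apply le_inf nhdsWithin_le_nhds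
      rw [Filter.le_principal_iff]
      exact Filter.mem_of_superset (Ioc_mem_nhdsGT_of_mem ⟨le_refl u, huτ'⟩)
        (Ioc_subset_Icc_self.trans (Icc_subset_Icc_left hua))
    have hev2 : ∀ᶠ s in nhdsWithin u (Ioi u), x s < c ∧ s ∈ Ioc u τ :=
      (hev.filter_mono hle).and (Ioc_mem_nhdsGT_of_mem ⟨le_refl u, huτ'⟩)
    obtain ⟨s, hs1, hs2⟩ := hev2.exists
    exact absurd (hafter s hs2.1 hs2.2) (not_lt.mpr hs1.le)
  · exact heq

/-- first time `x` is `≤ c` after `τ`. -/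
lemma first_cross {x : ℝ → ℝ} {τ b c : ℝ} (hτb : τ ≤ b) (hc : ContinuousOn x (Icc τ b))
    (hbb : x b ≤ c) (hτ : c < x τ) :
    ∃ d, d ∈ Ioc τ b ∧ x d = c ∧ ∀ s, τ ≤ s → s < d → c < x s := by
  set S : Set ℝ := {t | t ∈ Icc τ b ∧ x t ≤ c} with hS
  have hSne : S.Nonempty := ⟨b, ⟨hτb, le_refl b⟩, hbb⟩
  have hSbdd : BddBelow S := ⟨τ, fun t ht => ht.1.1⟩
  set d := sInf S with hd
  have hSclosed : IsClosed S := by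
    have : S = Icc τ b ∩ x ⁻¹' (Iic c) := by ext t; simp [hS, and_comm]
    rw [this]
    exact (hc.preimage_isClosed_of_isClosed isClosed_Icc isClosed_Iic)
  have hdS : d ∈ S := hSclosed.csInf_mem hSne hSbdd
  have hτd : τ ≤ d := hdS.1.1
  have hdb : d ≤ b := hdS.1.2
  have hbefore : ∀ s, τ ≤ s → s < d → c < x s := by
    intro s hτs hsd
    by_contra h
    push_neg at h
    have : s ∈ S := ⟨⟨hτs, hsd.le.trans hdb⟩, h⟩
    exact absurd (csInf_le hSbdd this) (not_le.mpr hsd)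
  have hτd' : τ < d := lt_of_le_of_ne hτd (fun h => by rw [← h] at hdS; exact absurd hdS.2 (not_le.mpr hτ))
  refine ⟨d, ⟨hτd', hdb⟩, ?_, hbefore⟩
  rcases lt_or_eq_of_le hdS.2 with hlt | heq
  · exfalso
    have hcw : ContinuousWithinAt x (Icc τ b) d := hc d hdS.1
    have hev : ∀ᶠ s in nhdsWithin d (Icc τ b), x s < c := hcw.eventually_lt_const hlt
    have hle : nhdsWithin d (Iio d) ≤ nhdsWithin d (Icc τ b) := by
      apply le_inf nhdsWithin_le_nhds
      rw [Filter.le_principal_iff]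
      exact Filter.mem_of_superset (Ico_mem_nhdsLT_of_mem ⟨hτd', le_refl d⟩)
        (Ico_subset_Icc_self.trans (Icc_subset_Icc_right hdb))
    have hev2 : ∀ᶠ s in nhdsWithin d (Iio d), x s < c ∧ s ∈ Ico τ d :=
      (hev.filter_mono hle).and (Ico_mem_nhdsLT_of_mem ⟨hτd', le_refl d⟩)
    obtain ⟨s, hs1, hs2⟩ := hev2.exists
    exact absurd (hbefore s hs2.1 hs2.2) (not_lt.mpr hs1.le)
  · exact heq

lemma fr_nonneg_of_upcross (f x : ℝ → ℝ) (M : ℝ) (hM : 0 ≤ M) {frc c u τ : ℝ}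
    (hfr : Tendsto f (nhdsWithin c (Ioi c)) (nhds frc))
    (hu0 : 0 ≤ u) (huτ : u < τ) (hxu : x u = c)
    (habove : ∀ s, u < s → s ≤ τ → c < x s)
    (hdiff : ∀ a b, 0 ≤ a → a ≤ b → x b - x a = ∫ s in a..b, f (x s))
    (hInt : ∀ a b, 0 ≤ a → a ≤ b → IntervalIntegrable (fun s => f (x s)) volume a b)
    (hlip : ∀ a b, 0 ≤ a → a ≤ b → |x b - x a| ≤ M * (b - a)) :
    0 ≤ frc := by
  by_contra hneg
  push_neg at hneg
  have hhalf : frc < frc / 2 := by linarith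
  have hmem : {z | f z < frc / 2} ∈ nhdsWithin c (Ioi c) :=
    hfr (Iio_mem_nhds hhalf)
  obtain ⟨δ', hδ'c, hδ'⟩ := mem_nhdsGT_iff_exists_Ioo_subset.mp hmem
  -- choose t
  set t := min τ (u + (δ' - c) / (M + 1)) with ht
  have hM1 : (0:ℝ) < M + 1 := by linarith
  have hδc : 0 < δ' - c := by simpa [sub_pos] using hδ'c
  have hut : u < t := lt_min huτ (lt_add_of_pos_right u (div_pos hδc hM1))
  have htτ : t ≤ τ := min_le_left _ _
  have hbound : ∀ s, s ∈ Ioc u t → f (x s) ≤ frc / 2 := by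
    intro s hs
    have hxs1 : c < x s := habove s hs.1 (hs.2.trans htτ)
    have hxs2 : x s < δ' := by
      have h1 : |x s - x u| ≤ M * (s - u) := hlip u s hu0 hs.1.le
      have h2 : s - u ≤ (δ' - c) / (M + 1) := by
        have := hs.2.trans (min_le_right τ (u + (δ' - c) / (M + 1)))
        linarith
      have h3 : x s - c ≤ M * ((δ' - c) / (M + 1)) := by
        rw [hxu] at h1
        have := (le_abs_self (x s - c)).trans h1
        nlinarith
      have h4 : M * ((δ' - c) / (M + 1)) < δ' - c := by
        have h5 : M * ((δ' - c) / (M + 1)) = (δ' - c) * (M / (M + 1)) := by ring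
        have h6 : M / (M + 1) < 1 := (div_lt_one hM1).mpr (by linarith)
        nlinarith
      linarith
    exact le_of_lt (hδ' ⟨hxs1, hxs2⟩)
  have hint : x t - x u = ∫ s in Ioc u t, f (x s) := by
    rw [hdiff u t hu0 hut.le, intervalIntegral.integral_of_le hut.le]
  have hmono : ∫ s in Ioc u t, f (x s) ≤ ∫ s in Ioc u t, (frc / 2 : ℝ) := by
    apply setIntegral_mono_on
    · exact (intervalIntegrable_iff_integrableOn_Ioc_of_le hut.le).mp (hInt u t hu0 hut.le)
    · rw [integrableOn_const_iff]
      right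
      rw [Real.volume_Ioc]
      exact ENNReal.ofReal_lt_top
    · exact measurableSet_Ioc
    · exact hbound
  have hconst : ∫ s in Ioc u t, (frc / 2 : ℝ) = (t - u) * (frc / 2) := by
    rw [setIntegral_const, measureReal_def, Real.volume_Ioc, ENNReal.toReal_ofReal (by linarith), smul_eq_mul]
  have hlt : x t - x u < 0 := by
    rw [hint]
    calc ∫ s in Ioc u t, f (x s) ≤ (t - u) * (frc / 2) := by rw [← hconst]; exact hmono
    _ < 0 := mul_neg_of_pos_of_neg (by linarith) (by linarith)
  have : c < x t := habove t hut htτ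
  rw [hxu] at hlt
  linarith

lemma fr_nonpos_of_downcross (f x : ℝ → ℝ) (M : ℝ) (hM : 0 ≤ M) {frc c τ d : ℝ}
    (hfr : Tendsto f (nhdsWithin c (Ioi c)) (nhds frc))
    (hτ0 : 0 ≤ τ) (hτd : τ < d) (hxd : x d = c)
    (habove : ∀ s, τ ≤ s → s < d → c < x s)
    (hdiff : ∀ a b, 0 ≤ a → a ≤ b → x b - x a = ∫ s in a..b, f (x s))
    (hInt : ∀ a b, 0 ≤ a → a ≤ b → IntervalIntegrable (fun s => f (x s)) volume a b)
    (hlip : ∀ a b, 0 ≤ a → a ≤ b → |x b - x a| ≤ M * (b - a)) :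
    frc ≤ 0 := by
  by_contra hpos
  push_neg at hpos
  have hhalf : frc / 2 < frc := by linarith
  have hmem : {z | frc / 2 < f z} ∈ nhdsWithin c (Ioi c) :=
    hfr (Ioi_mem_nhds hhalf)
  obtain ⟨δ', hδ'c, hδ'⟩ := mem_nhdsGT_iff_exists_Ioo_subset.mp hmem
  set t := max τ (d - (δ' - c) / (M + 1)) with ht
  have hM1 : (0:ℝ) < M + 1 := by linarith
  have hδc : 0 < δ' - c := by simpa [sub_pos] using hδ'c
  have htd : t < d := max_lt hτd (by nlinarith [div_pos hδc hM1])
  have hτt : τ ≤ t := le_max_left _ _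
  have ht0 : 0 ≤ t := hτ0.trans hτt
  have hbound : ∀ s, s ∈ Ioo t d → frc / 2 ≤ f (x s) := by
    intro s hs
    have hxs1 : c < x s := habove s (hτt.trans hs.1.le) hs.2
    have hxs2 : x s < δ' := by
      have h1 : |x d - x s| ≤ M * (d - s) := hlip s d (ht0.trans hs.1.le) hs.2.le
      have h2 : d - s ≤ (δ' - c) / (M + 1) := by
        have := le_max_right τ (d - (δ' - c) / (M + 1))
        have := this.trans_lt hs.1
        linarith
      have h3 : x s - c ≤ M * ((δ' - c) / (M + 1)) := by
        rw [hxd] at h1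
        rw [abs_sub_comm] at h1
        have := (le_abs_self (x s - c)).trans h1
        nlinarith
      have h4 : M * ((δ' - c) / (M + 1)) < δ' - c := by
        have h5 : M * ((δ' - c) / (M + 1)) = (δ' - c) * (M / (M + 1)) := by ring
        have h6 : M / (M + 1) < 1 := (div_lt_one hM1).mpr (by linarith)
        nlinarith
      linarith
    exact le_of_lt (hδ' ⟨hxs1, hxs2⟩)
  have hint : x d - x t = ∫ s in Ioo t d, f (x s) := by
    rw [hdiff t d ht0 htd.le, intervalIntegral.integral_of_le htd.le,
      integral_Ioc_eq_integral_Ioo]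
  have hmono : ∫ s in Ioo t d, (frc / 2 : ℝ) ≤ ∫ s in Ioo t d, f (x s) := by
    apply setIntegral_mono_on
    · rw [integrableOn_const_iff]
      right
      rw [Real.volume_Ioo]
      exact ENNReal.ofReal_lt_top
    · exact ((intervalIntegrable_iff_integrableOn_Ioc_of_le htd.le).mp
        (hInt t d ht0 htd.le)).mono_set Ioo_subset_Ioc_self
    · exact measurableSet_Ioo
    · exact hbound
  have hconst : ∫ s in Ioo t d, (frc / 2 : ℝ) = (d - t) * (frc / 2) := by
    rw [setIntegral_const, measureReal_def, Real.volume_Ioo, ENNReal.toReal_ofReal (by linarith), smul_eq_mul]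
  have hgt : 0 < x d - x t := by
    rw [hint]
    calc (0:ℝ) < (d - t) * (frc / 2) := mul_pos (by linarith) (by linarith)
    _ = ∫ s in Ioo t d, (frc / 2 : ℝ) := hconst.symm
    _ ≤ _ := hmono
  have : c < x t := habove t hτt htd
  rw [hxd] at hgt
  linarith

lemma cont_of_lip {x : ℝ → ℝ} {M : ℝ} (hM : 0 ≤ M)
    (hlip : ∀ a b, 0 ≤ a → a ≤ b → |x b - x a| ≤ M * (b - a)) :
    ContinuousOn x (Ici 0) := by
  intro σ hσ
  rw [Metric.continuousWithinAt_iff]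
  intro ε hε
  refine ⟨ε / (M + 1), by positivity, fun t ht hdist => ?_⟩
  have hM1 : (0:ℝ) < M + 1 := by linarith
  have key : |x t - x σ| ≤ M * |t - σ| := by
    rcases le_total t σ with h | h
    · rw [abs_sub_comm, show |t - σ| = σ - t by rw [abs_sub_comm]; exact abs_of_nonneg (by linarith)]
      exact hlip t σ ht h
    · rw [show |t - σ| = t - σ from abs_of_nonneg (by linarith)]
      exact hlip σ t hσ h
  rw [Real.dist_eq] at *
  calc |x t - x σ| ≤ M * |t - σ| := key
  _ < M * (ε / (M + 1)) + ε / (M + 1) := by nlinarith [abs_nonneg (t - σ)]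
  _ = ε * ((M + 1) / (M + 1)) := by ring
  _ = ε := by rw [div_self hM1.ne', mul_one]

lemma no_peak (f : ℝ → ℝ) (M : ℝ) (hM : 0 ≤ M) (fr : ℝ → ℝ)
    (hfr : ∀ c, Tendsto f (nhdsWithin c (Ioi c)) (nhds (fr c)))
    (hz : ∀ c, fr c = 0 → f c = 0)
    (x : ℝ → ℝ)
    (hdiff : ∀ a b, 0 ≤ a → a ≤ b → x b - x a = ∫ s in a..b, f (x s))
    (hInt : ∀ a b, 0 ≤ a → a ≤ b → IntervalIntegrable (fun s => f (x s)) volume a b)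
    (hlip : ∀ a b, 0 ≤ a → a ≤ b → |x b - x a| ≤ M * (b - a)) :
    ¬ ∃ u v w, 0 ≤ u ∧ u < v ∧ v < w ∧ x u < x v ∧ x w < x v := by
  rintro ⟨u, v, w, hu0, huv, hvw, h1, h2⟩
  have hcont : ContinuousOn x (Ici 0) := cont_of_lip hM hlip
  have huw : u ≤ w := (huv.trans hvw).le
  have hIccsub : Icc u w ⊆ Ici 0 := fun t ht => hu0.trans ht.1
  obtain ⟨τ, hτmem, hτmax⟩ := isCompact_Icc.exists_isMaxOn (nonempty_Icc.mpr huw)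
    (hcont.mono hIccsub)
  set m := x τ with hm
  have hvm : x v ≤ m := hτmax ⟨huv.le, hvw.le⟩
  have hum : x u < m := h1.trans_le hvm
  have hwm : x w < m := h2.trans_le hvm
  have huτ : u < τ := lt_of_le_of_ne hτmem.1 (fun h => hum.ne (congrArg x h))
  have hτw : τ < w := lt_of_le_of_ne hτmem.2 (fun h => hwm.ne (congrArg x h).symm)
  have hτ0 : 0 ≤ τ := hu0.trans huτ.le
  set c0 := max (x u) (x w) with hc0
  have hc0m : c0 < m := max_lt hum hwm
  -- key : f vanishes strictly between c0 and m
  have key : ∀ c, c0 < c → c < m → f c = 0 := by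
    intro c hc1 hc2
    apply hz
    have hge : 0 ≤ fr c := by
      obtain ⟨u', hu'mem, hxu', habove⟩ := last_cross huτ.le
        (hcont.mono (fun t ht => hu0.trans ht.1))
        (((le_max_left _ _).trans_lt hc1).le) (hc2 : c < x τ)
      exact fr_nonneg_of_upcross f x M hM (hfr c) (hu0.trans hu'mem.1) hu'mem.2 hxu'
        habove hdiff hInt hlip
    have hle : fr c ≤ 0 := by
      obtain ⟨d, hdmem, hxd, habove⟩ := first_cross hτw.le
        (hcont.mono (fun t ht => hτ0.trans ht.1))
        (((le_max_right _ _).trans_lt hc1).le) (hc2 : c < x τ)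
      exact fr_nonpos_of_downcross f x M hM (hfr c) hτ0 hdmem.1 hxd habove hdiff hInt hlip
    linarith
  -- take level c* halfway and derive the contradiction
  set c' := (c0 + m) / 2 with hc'
  have hc'1 : c0 < c' := by rw [hc']; linarith
  have hc'2 : c' < m := by rw [hc']; linarith
  obtain ⟨t1, ht1mem, hxt1, hafter⟩ := last_cross huτ.le
    (hcont.mono (fun t ht => hu0.trans ht.1))
    (((le_max_left _ _).trans_lt hc'1).le) hc'2
  have ht10 : 0 ≤ t1 := hu0.trans ht1mem.1
  -- first time x reaches m on [t1, τ] : apply first_cross to -x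
  obtain ⟨σ, hσmem, hxσ, hbefore⟩ := first_cross (x := fun t => - x t) ht1mem.2.le
    ((hcont.mono (fun t (ht : t ∈ Icc t1 τ) => ht10.trans ht.1)).neg)
    (by simp [hm] : -x τ ≤ -m) (by simpa [hxt1] using hc'2)
  have hM1 : (0:ℝ) < M + 1 := by linarith
  have hxσ' : x σ = m := by simpa using hxσ
  have claim : ∀ t, t1 < t → t < σ → x t = c' := by
    intro t h1t h2t
    have heq : x t - x t1 = ∫ s in Ioc t1 t, f (x s) := by
      rw [hdiff t1 t ht10 h1t.le, intervalIntegral.integral_of_le h1t.le]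
    have hzero : EqOn (fun s => f (x s)) (fun _ => (0:ℝ)) (Ioc t1 t) := by
      intro s hs
      have hs1 : c' < x s := hafter s hs.1 (hs.2.trans (h2t.le.trans hσmem.2))
      have hs2 : x s < m := by
        have := hbefore s hs.1.le (hs.2.trans_lt h2t)
        simpa using this
      exact key (x s) (hc'1.trans hs1) hs2
    rw [setIntegral_congr_fun measurableSet_Ioc hzero] at heq
    simp only [integral_zero] at heq
    linarith [hxt1, heq]
  have hmc' : 0 < m - c' := by linarith
  set t := max t1 (σ - (m - c') / (M + 1)) with htdef
  have htσ : t < σ := max_lt hσmem.1 (by linarith [div_pos hmc' hM1])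
  have hxt : x t = c' := by
    rcases eq_or_lt_of_le (le_max_left t1 (σ - (m - c') / (M + 1))) with h | h
    · rw [← htdef] at h; rw [← h]; exact hxt1
    · exact claim t h htσ
  have ht0 : 0 ≤ t := ht10.trans (le_max_left _ _)
  have hfin : |x σ - x t| ≤ M * (σ - t) := hlip t σ ht0 htσ.le
  rw [hxσ', hxt] at hfin
  have h5 : m - c' ≤ M * (σ - t) := (le_abs_self _).trans hfin
  have hσt : σ - t ≤ (m - c') / (M + 1) := by
    have := le_max_right t1 (σ - (m - c') / (M + 1))
    rw [← htdef] at this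
    linarith
  have h6 : M * (σ - t) ≤ M * ((m - c') / (M + 1)) := mul_le_mul_of_nonneg_left hσt hM
  have h7 : M * ((m - c') / (M + 1)) < m - c' := by
    have h8 : M * ((m - c') / (M + 1)) = (m - c') * (M / (M + 1)) := by ring
    have h9 : M / (M + 1) < 1 := (div_lt_one hM1).mpr (by linarith)
    nlinarith
  linarith

lemma integrable_all (f x : ℝ → ℝ) (M : ℝ) (hb : ∀ y : ℝ, |f y| ≤ M)
    (hsol : ∀ t : ℝ, 0 ≤ t → x t = x 0 + ∫ s in (0:ℝ)..t, f (x s)) :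
    ∀ t, 0 ≤ t → IntervalIntegrable (fun s => f (x s)) volume 0 t := by
  set g := fun s => f (x s) with hg
  by_contra hcon
  push_neg at hcon
  set B := {t : ℝ | 0 ≤ t ∧ ¬ IntervalIntegrable g volume 0 t} with hB
  have hBne : B.Nonempty := by
    obtain ⟨t, h1, h2⟩ := hcon
    exact ⟨t, h1, h2⟩
  have hBbdd : BddBelow B := ⟨0, fun t ht => ht.1⟩
  set T := sInf B with hT
  have hT0 : 0 ≤ T := le_csInf hBne (fun t ht => ht.1)
  have hup : ∀ s, T < s → s ∈ B := by
    intro s hs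
    obtain ⟨t, htB, hts⟩ := exists_lt_of_csInf_lt hBne hs
    refine ⟨htB.1.trans hts.le, fun hint => htB.2 (hint.mono_set ?_)⟩
    rw [uIcc_of_le htB.1, uIcc_of_le (htB.1.trans hts.le)]
    exact Icc_subset_Icc_right hts.le
  have hconst : ∀ s, T < s → x s = x 0 := by
    intro s hs
    have hBs := hup s hs
    rw [hsol s hBs.1, intervalIntegral.integral_undef hBs.2, add_zero]
  have hgood : ∀ t, 0 ≤ t → t < T → IntervalIntegrable g volume 0 t := by
    intro t h0 hlt
    by_contra hc
    exact absurd (csInf_le hBbdd ⟨h0, hc⟩) (not_le.mpr hlt)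
  -- `g` is integrable on `Ioc 0 T`
  have hTio : IntegrableOn g (Ioc 0 T) := by
    rcases eq_or_lt_of_le hT0 with hTeq | hTpos
    · rw [← hTeq, Ioc_self]
      exact integrableOn_empty
    · have hIoo : IntegrableOn g (Ioo 0 T) := by
        set tn : ℕ → ℝ := fun n => T - T / (n + 2) with htn
        have htnpos : ∀ n : ℕ, (0:ℝ) < (n:ℝ) + 2 := fun n => by positivity
        have htn_lt : ∀ n, tn n < T := fun n =>
          sub_lt_self T (div_pos hTpos (htnpos n))
        have htn0 : ∀ n, 0 ≤ tn n := by
          intro n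
          have : T / ((n:ℝ) + 2) ≤ T := by
            apply div_le_self hT0
            have : (0:ℝ) ≤ (n:ℝ) := Nat.cast_nonneg n
            linarith
          simp only [htn, sub_nonneg]
          exact this
        have hcover : Ioo 0 T = ⋃ n, Ioc 0 (tn n) := by
          ext z
          constructor
          · rintro ⟨hz0, hzT⟩
            obtain ⟨n, hn⟩ := exists_nat_ge (T / (T - z))
            refine mem_iUnion.mpr ⟨n, hz0, ?_⟩
            have hTz : 0 < T - z := by linarith
            have h1 : T ≤ ((n:ℝ)) * (T - z) := by
              rw [div_le_iff₀ hTz] at hn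
              linarith
            have h2 : T ≤ ((n:ℝ) + 2) * (T - z) := by nlinarith
            have h3 : T / ((n:ℝ) + 2) ≤ T - z := by
              rw [div_le_iff₀ (htnpos n)]
              linarith [h2]
            simp only [htn]
            linarith
          · intro hz
            obtain ⟨n, hz1, hz2⟩ := mem_iUnion.mp hz
            exact ⟨hz1, hz2.trans_lt (htn_lt n)⟩
        rw [hcover]
        have haesm : AEStronglyMeasurable g (volume.restrict (⋃ n, Ioc 0 (tn n))) :=
          aestronglyMeasurable_iUnion_iff.mpr fun n =>
            ((intervalIntegrable_iff_integrableOn_Ioc_of_le (htn0 n)).mp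
              (hgood (tn n) (htn0 n) (htn_lt n))).aestronglyMeasurable
        have hfin : volume (⋃ n, Ioc 0 (tn n)) < ⊤ := by
          rw [← hcover, Real.volume_Ioo]
          exact ENNReal.ofReal_lt_top
        refine Integrable.mono' (g := fun _ => M) ?_ haesm ?_
        · exact (integrableOn_const_iff (C := M)).mpr (Or.inr hfin)
        · filter_upwards with a
          rw [Real.norm_eq_abs]
          exact hb _
      have hsing : IntegrableOn g {T} := by
        rw [IntegrableOn, Measure.restrict_eq_zero.mpr Real.volume_singleton]
        exact integrable_zero_measure
      refine (hIoo.union hsing).mono_set ?_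
      intro z hz
      rcases lt_or_eq_of_le hz.2 with h | h
      · exact Or.inl ⟨hz.1, h⟩
      · exact Or.inr h
  -- contradiction at T + 1
  have hT1 : T + 1 ∈ B := hup (T + 1) (by linarith)
  apply hT1.2
  rw [intervalIntegrable_iff_integrableOn_Ioc_of_le (by linarith : (0:ℝ) ≤ T + 1),
    ← Ioc_union_Ioc_eq_Ioc hT0 (by linarith : T ≤ T + 1)]
  refine hTio.union ?_
  have : IntegrableOn (fun _ => f (x 0)) (Ioc T (T + 1)) := by
    rw [integrableOn_const_iff]
    exact Or.inr (by rw [Real.volume_Ioc]; exact ENNReal.ofReal_lt_top)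
  refine this.congr_fun ?_ measurableSet_Ioc
  intro z hz
  simp only [hg]
  rw [hconst z hz.1]

theorem caratheodory_solution_monotone'
    (f : ℝ → ℝ) (M : ℝ) (hb : ∀ y : ℝ, |f y| ≤ M)
    (fl fr : ℝ → ℝ) (hreg : ∀ y : ℝ,
      Filter.Tendsto f (nhdsWithin y (Set.Iio y)) (nhds (fl y)) ∧
      Filter.Tendsto f (nhdsWithin y (Set.Ioi y)) (nhds (fr y)))
    (hnj : ∀ y : ℝ, (fl y * fr y = 0 ∨ (0 < fl y ∧ fr y < 0)) → f y = 0)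
    (x : ℝ → ℝ)
    (hsol : ∀ t : ℝ, 0 ≤ t → x t = x 0 + ∫ s in (0:ℝ)..t, f (x s)) :
    MonotoneOn x (Set.Ici 0) ∨ AntitoneOn x (Set.Ici 0) := by
  have hM : 0 ≤ M := (abs_nonneg _).trans (hb 0)
  have hM1 : (0:ℝ) < M + 1 := by linarith
  have hInt0 : ∀ t, 0 ≤ t → IntervalIntegrable (fun s => f (x s)) volume 0 t :=
    integrable_all f x M hb hsol
  have hInt : ∀ a b, 0 ≤ a → a ≤ b → IntervalIntegrable (fun s => f (x s)) volume a b := by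
    intro a b h0 hab
    refine (hInt0 b (h0.trans hab)).mono_set ?_
    rw [uIcc_of_le hab, uIcc_of_le (h0.trans hab)]
    exact Icc_subset_Icc_left h0
  have hdiff : ∀ a b, 0 ≤ a → a ≤ b → x b - x a = ∫ s in a..b, f (x s) := by
    intro a b h0 hab
    have hadd := intervalIntegral.integral_add_adjacent_intervals (μ := volume)
      (hInt0 a h0) (hInt a b h0 hab)
    rw [hsol a h0, hsol b (h0.trans hab)]
    linarith [hadd]
  have hlip : ∀ a b, 0 ≤ a → a ≤ b → |x b - x a| ≤ M * (b - a) := by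
    intro a b h0 hab
    rw [hdiff a b h0 hab]
    have hnorm := intervalIntegral.norm_integral_le_of_norm_le_const (a := a) (b := b)
      (C := M) (f := fun s => f (x s))
      (fun s _ => by rw [Real.norm_eq_abs]; exact hb _)
    rw [Real.norm_eq_abs, abs_of_nonneg (sub_nonneg.mpr hab)] at hnorm
    exact hnorm
  have hcont : ContinuousOn x (Ici 0) := cont_of_lip hM hlip
  -- no peaks
  have hpk := no_peak f M hM fr (fun c => (hreg c).2)
    (fun c hc => hnj c (Or.inl (by rw [hc, mul_zero]))) x hdiff hInt hlip
  -- no valleys, via reflection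
  have hvl := no_peak (fun z => -f (-z)) M hM (fun c => -(fl (-c)))
    (by
      intro c
      have hneg : Tendsto (fun z : ℝ => -z) (nhdsWithin c (Ioi c)) (nhdsWithin (-c) (Iio (-c))) := by
        apply tendsto_nhdsWithin_of_tendsto_nhds_of_eventually_within
        · exact (continuous_neg.tendsto c).mono_left nhdsWithin_le_nhds
        · filter_upwards [self_mem_nhdsWithin] with z hz
          exact neg_lt_neg (mem_Ioi.mp hz)
      exact ((hreg (-c)).1.comp hneg).neg)
    (by
      intro c hc
      have hfl : fl (-c) = 0 := by
        have := neg_eq_zero.mp hc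
        exact this
      have := hnj (-c) (Or.inl (by rw [hfl, zero_mul]))
      show -f (-c) = 0
      rw [this, neg_zero])
    (fun t => -x t)
    (by
      intro a b h0 hab
      simp only [neg_neg]
      rw [intervalIntegral.integral_neg, ← hdiff a b h0 hab]
      ring)
    (by
      intro a b h0 hab
      have := (hInt a b h0 hab).neg
      simpa [Pi.neg_def] using this)
    (by
      intro a b h0 hab
      have := hlip a b h0 hab
      rw [show -x b - -x a = -(x b - x a) by ring, abs_neg]
      exact this)
  -- now conclude
  by_contra hcon
  push_neg at hcon
  obtain ⟨hmon, hant⟩ := hcon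
  simp only [MonotoneOn, AntitoneOn, not_forall, not_le] at hmon hant
  obtain ⟨p, hp0, q, hq0, hpq, hxpq⟩ := hmon
  obtain ⟨r, hr0, s, hs0, hrs, hxrs⟩ := hant
  set a := min p r with ha
  set b := max q s with hbdef
  have hab0 : (0:ℝ) ≤ a := le_min hp0 hr0
  have hpa : a ≤ p := min_le_left _ _
  have hra : a ≤ r := min_le_right _ _
  have hqb : q ≤ b := le_max_left _ _
  have hsb : s ≤ b := le_max_right _ _
  have hab : a ≤ b := hpa.trans (hpq.trans hqb)
  have hsub : Icc a b ⊆ Ici 0 := fun t ht => hab0.trans ht.1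
  have hcont' : ContinuousOn x (Icc a b) := hcont.mono hsub
  have hpmem : p ∈ Icc a b := ⟨hpa, hpq.trans hqb⟩
  have hqmem : q ∈ Icc a b := ⟨hpa.trans hpq, hqb⟩
  have hrmem : r ∈ Icc a b := ⟨hra, hrs.trans hsb⟩
  have hsmem : s ∈ Icc a b := ⟨hra.trans hrs, hsb⟩
  obtain ⟨tM, htM, hmax0⟩ := isCompact_Icc.exists_isMaxOn (nonempty_Icc.mpr hab) hcont'
  obtain ⟨tm, htm, hmin0⟩ := isCompact_Icc.exists_isMinOn (nonempty_Icc.mpr hab) hcont'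
  have hmax : ∀ t, t ∈ Icc a b → x t ≤ x tM := fun t ht => hmax0 ht
  have hmin : ∀ t, t ∈ Icc a b → x tm ≤ x t := fun t ht => hmin0 ht
  by_cases hA : x a < x tM ∧ x b < x tM
  · exact hpk ⟨a, tM, b, hab0,
      lt_of_le_of_ne htM.1 (fun h => (hA.1.ne (congrArg x h)).elim),
      lt_of_le_of_ne htM.2 (fun h => (hA.2.ne (congrArg x h).symm).elim),
      hA.1, hA.2⟩
  by_cases hB : x tm < x a ∧ x tm < x b
  · exact hvl ⟨a, tm, b, hab0,
      lt_of_le_of_ne htm.1 (fun h => (hB.1.ne (congrArg x h).symm).elim),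
      lt_of_le_of_ne htm.2 (fun h => (hB.2.ne (congrArg x h)).elim),
      neg_lt_neg hB.1, neg_lt_neg hB.2⟩
  push_neg at hA hB
  have hMa : x a ≤ x tM := hmax a ⟨le_refl a, hab⟩
  have hMb : x b ≤ x tM := hmax b ⟨hab, le_refl b⟩
  have hma : x tm ≤ x a := hmin a ⟨le_refl a, hab⟩
  have hmb : x tm ≤ x b := hmin b ⟨hab, le_refl b⟩
  have hA' : x tM ≤ x a ∨ x tM ≤ x b := by
    rcases lt_or_ge (x a) (x tM) with h | h
    · exact Or.inr (hA h)
    · exact Or.inl h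
  have hB' : x a ≤ x tm ∨ x b ≤ x tm := by
    rcases lt_or_ge (x tm) (x a) with h | h
    · exact Or.inr (hB h)
    · exact Or.inl h
  rcases hA' with h1 | h1 <;> rcases hB' with h2 | h2
  · -- constant
    linarith [hmax p hpmem, hmin p hpmem, hmax q hqmem, hmin q hqmem]
  · -- max at a, min at b : peak over [r, b]
    have hrb : r ≤ b := hrs.trans hsb
    have hcont'' : ContinuousOn x (Icc r b) := hcont'.mono (Icc_subset_Icc_left hra)
    obtain ⟨t2, ht2, hmax2⟩ := isCompact_Icc.exists_isMaxOn (nonempty_Icc.mpr hrb) hcont''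
    have hs2 : x s ≤ x t2 := hmax2 (⟨hrs, hsb⟩ : s ∈ Icc r b)
    have hr2 : x r < x t2 := hxrs.trans_le hs2
    have hb2 : x b < x t2 := by linarith [hmin r hrmem]
    exact hpk ⟨r, t2, b, hr0,
      lt_of_le_of_ne ht2.1 (fun h => (hr2.ne (congrArg x h)).elim),
      lt_of_le_of_ne ht2.2 (fun h => (hb2.ne (congrArg x h).symm).elim),
      hr2, hb2⟩
  · -- min at a, max at b : valley over [p, b]
    have hpb : p ≤ b := hpq.trans hqb
    have hcont'' : ContinuousOn x (Icc p b) := hcont'.mono (Icc_subset_Icc_left hpa)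
    obtain ⟨t2, ht2, hmin2⟩ := isCompact_Icc.exists_isMinOn (nonempty_Icc.mpr hpb) hcont''
    have hq2 : x t2 ≤ x q := hmin2 (⟨hpq, hqb⟩ : q ∈ Icc p b)
    have hp2 : x t2 < x p := hq2.trans_lt hxpq
    have hb2 : x t2 < x b := by linarith [hmax p hpmem]
    exact hvl ⟨p, t2, b, hp0,
      lt_of_le_of_ne ht2.1 (fun h => (hp2.ne (congrArg x h).symm).elim),
      lt_of_le_of_ne ht2.2 (fun h => (hb2.ne (congrArg x h)).elim),
      neg_lt_neg hp2, neg_lt_neg hb2⟩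
  · -- constant
    linarith [hmax p hpmem, hmin p hpmem, hmax q hqmem, hmin q hqmem]


/-- Every Carathéodory solution of `ẋ = f(x)` on `[0,∞)` is monotone:
either nondecreasing or nonincreasing on `[0,∞)`. -/
theorem caratheodory_solution_monotone
    (f : ℝ → ℝ) (M : ℝ) (hb : ∀ y : ℝ, |f y| ≤ M)
    (fl fr : ℝ → ℝ) (hreg : Regulated f fl fr) (hnj : NoJamming f fl fr)
    (x : ℝ → ℝ)
    (hsol : ∀ t : ℝ, 0 ≤ t → x t = x 0 + ∫ s in (0:ℝ)..t, f (x s)) :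
    MonotoneOn x (Set.Ici 0) ∨ AntitoneOn x (Set.Ici 0) := by
  exact caratheodory_solution_monotone' f M hb fl fr hreg hnj x hsol
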